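/- Let T = 3k+1 with k ≥ 1, and let w be a word of length T on states {1,2,3} without self-loops, with transition counts x_{ij}. Then x_{12} + x_{31} + x_{32} ≥ k. -/

import Mathlib

/-- Transition count of the word `s` (with `T` letters, indices `0,...,T-1`)
from state `i` to state `j`. -/
def tcount (s : ℕ → Fin 3) (T : ℕ) (i j : Fin 3) : ℕ :=
  ((Finset.range (T - 1)).filter (fun t => s t = i ∧ s (t + 1) = j)).card

/-- `s` is a word of length `T` on the three states without self-loops. -/
def IsWord (s : ℕ → Fin 3) (T : ℕ) : Prop :=
  ∀ t, t + 1 < T → s t ≠ s (t + 1)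

lemma key_fin3 (a b c d : Fin 3) (h1 : a ≠ b) (h2 : b ≠ c) (h3 : c ≠ d) :
    ((a = 0 ∧ b = 1) ∨ (a = 2 ∧ b = 0) ∨ (a = 2 ∧ b = 1)) ∨
    ((b = 0 ∧ c = 1) ∨ (b = 2 ∧ c = 0) ∨ (b = 2 ∧ c = 1)) ∨
    ((c = 0 ∧ d = 1) ∨ (c = 2 ∧ d = 0) ∨ (c = 2 ∧ d = 1)) := by
  revert h1 h2 h3; revert a b c d; decide

theorem stmt6 (k : ℕ) (hk : 1 ≤ k) (s : ℕ → Fin 3) (hs : IsWord s (3 * k + 1)) :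
    tcount s (3 * k + 1) 0 1 + tcount s (3 * k + 1) 2 0 + tcount s (3 * k + 1) 2 1 ≥ k := by
  set P : ℕ → Prop := fun t =>
    (s t = 0 ∧ s (t + 1) = 1) ∨ (s t = 2 ∧ s (t + 1) = 0) ∨ (s t = 2 ∧ s (t + 1) = 1)
    with hPdef
  have hchoice : ∀ j : Fin k, ∃ t, 3 * (j : ℕ) ≤ t ∧ t < 3 * (j : ℕ) + 3 ∧ P t := by
    intro j
    have hj : (j : ℕ) < k := j.2
    have h1 : s (3 * (j : ℕ)) ≠ s (3 * (j : ℕ) + 1) := hs _ (by omega)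
    have h2 : s (3 * (j : ℕ) + 1) ≠ s (3 * (j : ℕ) + 2) := hs _ (by omega)
    have h3 : s (3 * (j : ℕ) + 2) ≠ s (3 * (j : ℕ) + 3) := hs _ (by omega)
    rcases key_fin3 _ _ _ _ h1 h2 h3 with h | h | h
    · exact ⟨3 * (j : ℕ), le_refl _, by omega, h⟩
    · exact ⟨3 * (j : ℕ) + 1, by omega, by omega, by
        simpa [hPdef, show 3 * (j : ℕ) + 1 + 1 = 3 * (j : ℕ) + 2 by omega] using h⟩
    · exact ⟨3 * (j : ℕ) + 2, by omega, by omega, by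
        simpa [hPdef, show 3 * (j : ℕ) + 2 + 1 = 3 * (j : ℕ) + 3 by omega] using h⟩
  choose f hf1 hf2 hf3 using hchoice
  classical
  have hF : k ≤ ((Finset.range (3 * k)).filter P).card := by
    have := Finset.card_le_card_of_injOn f
      (s := (Finset.univ : Finset (Fin k)))
      (t := (Finset.range (3 * k)).filter P)
      (fun j _ => by
        simp only [Finset.mem_coe, Finset.mem_filter, Finset.mem_range]
        exact ⟨by have := j.2; have := hf2 j; omega, hf3 j⟩)
      (fun j _ j' _ hjj' => by
        have a1 := hf1 j; have a2 := hf2 j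
        have b1 := hf1 j'; have b2 := hf2 j'
        have : (j : ℕ) = (j' : ℕ) := by omega
        exact Fin.ext this)
    simpa using this
  have hsplit : ((Finset.range (3 * k)).filter P).card ≤
      tcount s (3 * k + 1) 0 1 + tcount s (3 * k + 1) 2 0 + tcount s (3 * k + 1) 2 1 := by
    have h1 : tcount s (3 * k + 1) 0 1 =
        ((Finset.range (3 * k)).filter (fun t => s t = 0 ∧ s (t + 1) = 1)).card := by
      simp [tcount]
    have h2 : tcount s (3 * k + 1) 2 0 =
        ((Finset.range (3 * k)).filter (fun t => s t = 2 ∧ s (t + 1) = 0)).card := by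
      simp [tcount]
    have h3 : tcount s (3 * k + 1) 2 1 =
        ((Finset.range (3 * k)).filter (fun t => s t = 2 ∧ s (t + 1) = 1)).card := by
      simp [tcount]
    rw [h1, h2, h3]
    simp only [hPdef, Finset.filter_or]
    calc (((Finset.range (3 * k)).filter (fun t => s t = 0 ∧ s (t + 1) = 1)) ∪
          (((Finset.range (3 * k)).filter (fun t => s t = 2 ∧ s (t + 1) = 0)) ∪
           ((Finset.range (3 * k)).filter (fun t => s t = 2 ∧ s (t + 1) = 1)))).card
        ≤ ((Finset.range (3 * k)).filter (fun t => s t = 0 ∧ s (t + 1) = 1)).card +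
          (((Finset.range (3 * k)).filter (fun t => s t = 2 ∧ s (t + 1) = 0)) ∪
           ((Finset.range (3 * k)).filter (fun t => s t = 2 ∧ s (t + 1) = 1))).card :=
        Finset.card_union_le _ _
      _ ≤ _ := by
        have := Finset.card_union_le
          ((Finset.range (3 * k)).filter (fun t => s t = 2 ∧ s (t + 1) = 0))
          ((Finset.range (3 * k)).filter (fun t => s t = 2 ∧ s (t + 1) = 1))
        omega
  exact le_trans hF hsplit
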